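/- Fix q ∈ [m] whose column in A^base is nonzero, lying in a segment of ℓ columns carrying an MDS block of rank T/k. Then for S ⊆ [m]\{q} with |S| = s, the pair (q,S) is decodable in A^base if and only if the number j of elements of S whose columns lie in the same segment as q satisfies ℓ − T/k ≤ j ≤ ℓ − 1. Consequently, the number of such S equals Σ_{j=ℓ−T/k}^{ℓ−1} C(ℓ−1, j) · C(m−ℓ, s−j). -/

import Mathlib

open Finset
open scoped Classical


lemma stmt8_count {α : Type*} [Fintype α] [DecidableEq α] (q : α) (P Q : Finset α)
    (hPq : q ∉ P) (hQq : q ∉ Q) (hdisj : Disjoint P Q)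
    (hcover : ∀ x, x ≠ q → x ∈ P ∨ x ∈ Q) (s j : ℕ) :
    (Finset.univ.filter fun S : Finset α => q ∉ S ∧ S.card = s ∧ (S ∩ P).card = j).card
      = if j ≤ s then P.card.choose j * Q.card.choose (s - j) else 0 := by
  by_cases hjs : j ≤ s
  · rw [if_pos hjs, ← Finset.card_powersetCard j P, ← Finset.card_powersetCard (s - j) Q,
      ← Finset.card_product]
    apply Finset.card_nbij' (fun S => (S ∩ P, S ∩ Q)) (fun p => p.1 ∪ p.2)
    · intro S hS
      simp only [Finset.mem_coe, mem_filter, mem_univ, true_and] at hS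
      obtain ⟨hqS, hcard, hjS⟩ := hS
      have hSsub : S ⊆ P ∪ Q := by
        intro x hx
        rcases hcover x (fun h => hqS (h ▸ hx)) with h | h <;> simp [h]
      have hpart : (S ∩ P) ∪ (S ∩ Q) = S := by
        rw [← Finset.inter_union_distrib_left]
        exact Finset.inter_eq_left.mpr hSsub
      have hdisj2 : Disjoint (S ∩ P) (S ∩ Q) :=
        hdisj.mono Finset.inter_subset_right Finset.inter_subset_right
      have hcards : (S ∩ P).card + (S ∩ Q).card = s := by
        rw [← Finset.card_union_of_disjoint hdisj2, hpart, hcard]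
      simp only [Finset.mem_coe, Finset.mem_product, Finset.mem_powersetCard]
      exact ⟨⟨Finset.inter_subset_right, hjS⟩, Finset.inter_subset_right, by omega⟩
    · intro p hp
      simp only [Finset.mem_coe, Finset.mem_product, Finset.mem_powersetCard] at hp
      obtain ⟨⟨h1P, h1c⟩, h2Q, h2c⟩ := hp
      simp only [Finset.mem_coe, mem_filter, mem_univ, true_and]
      have hq' : q ∉ p.1 ∪ p.2 := by
        simp only [Finset.mem_union]
        rintro (h | h)
        exacts [hPq (h1P h), hQq (h2Q h)]
      have hd : Disjoint p.1 p.2 := hdisj.mono h1P h2Q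
      refine ⟨hq', by rw [Finset.card_union_of_disjoint hd, h1c, h2c]; omega, ?_⟩
      have h2P : Disjoint p.2 P := hdisj.symm.mono_left h2Q
      rw [Finset.union_inter_distrib_right, Finset.inter_eq_left.mpr h1P,
        Finset.disjoint_iff_inter_eq_empty.mp h2P, Finset.union_empty, h1c]
    · intro S hS
      simp only [Finset.mem_coe, mem_filter, mem_univ, true_and] at hS
      obtain ⟨hqS, hcard, hjS⟩ := hS
      have hSsub : S ⊆ P ∪ Q := by
        intro x hx
        rcases hcover x (fun h => hqS (h ▸ hx)) with h | h <;> simp [h]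
      dsimp only
      rw [← Finset.inter_union_distrib_left]
      exact Finset.inter_eq_left.mpr hSsub
    · intro p hp
      simp only [Finset.mem_coe, Finset.mem_product, Finset.mem_powersetCard] at hp
      obtain ⟨⟨h1P, h1c⟩, h2Q, h2c⟩ := hp
      have h2P : Disjoint p.2 P := hdisj.symm.mono_left h2Q
      have h1Q : Disjoint p.1 Q := hdisj.mono_left h1P
      have e1 : (p.1 ∪ p.2) ∩ P = p.1 := by
        rw [Finset.union_inter_distrib_right, Finset.inter_eq_left.mpr h1P,
          Finset.disjoint_iff_inter_eq_empty.mp h2P, Finset.union_empty]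
      have e2 : (p.1 ∪ p.2) ∩ Q = p.2 := by
        rw [Finset.union_inter_distrib_right, Finset.inter_eq_left.mpr h2Q,
          Finset.disjoint_iff_inter_eq_empty.mp h1Q, Finset.empty_union]
      exact Prod.ext e1 e2
  · rw [if_neg hjs]
    rw [Finset.card_eq_zero, Finset.filter_eq_empty_iff]
    intro S _
    rintro ⟨hqS, hcard, hjS⟩
    exact hjs (hjS ▸ hcard ▸ Finset.card_le_card Finset.inter_subset_left)


/-- The submodule of vectors supported on rows in row-block `c`. -/
def stmt8_V {F : Type*} [Field F] {n k : ℕ} (rb : Fin n → Fin k) (c : Fin k) :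
    Submodule F (Fin n → F) where
  carrier := {v | ∀ i, rb i ≠ c → v i = 0}
  add_mem' := fun ha hb i hi => by simp [ha i hi, hb i hi]
  zero_mem' := fun i _ => rfl
  smul_mem' := fun a v hv i hi => by simp [hv i hi]

/-- The submodule of vectors vanishing on rows in row-block `c`. -/
def stmt8_V' {F : Type*} [Field F] {n k : ℕ} (rb : Fin n → Fin k) (c : Fin k) :
    Submodule F (Fin n → F) where
  carrier := {v | ∀ i, rb i = c → v i = 0}
  add_mem' := fun ha hb i hi => by simp [ha i hi, hb i hi]
  zero_mem' := fun i _ => rfl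
  smul_mem' := fun a v hv i hi => by simp [hv i hi]

/-- If at least `t` columns of segment `c` remain available, the column of `q` lies in
their span. -/
lemma stmt8_mem {F : Type*} [Field F] {n k m t : ℕ}
    (A : Matrix (Fin n) (Fin m) F)
    (seg : Fin m → Option (Fin k)) (rb : Fin n → Fin k) (c : Fin k)
    (hrb : (Finset.univ.filter fun i => rb i = c).card = t)
    (hblock : ∀ j c', seg j = some c' → ∀ i, rb i ≠ c' → A i j = 0)
    (hMDS : ∀ J : Finset (Fin m), (∀ j ∈ J, seg j = some c) → J.card = t →
      LinearIndependent F (fun j : {j // j ∈ J} => fun i => A i j.1))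
    (q : Fin m) (hq : seg q = some c)
    (T : Set (Fin m)) (avail : Finset (Fin m))
    (havail : ∀ j ∈ avail, seg j = some c ∧ j ∈ T)
    (hcard : t ≤ avail.card) :
    (fun i => A i q) ∈ Submodule.span F ((fun j i => A i j) '' T) := by
  obtain ⟨J, hJsub, hJcard⟩ := Finset.exists_subset_card_eq hcard
  have hJc : ∀ j ∈ J, seg j = some c := fun j hj => (havail j (hJsub hj)).1
  set v : {j // j ∈ J} → (Fin n → F) := fun j => fun i => A i j.1 with hv
  have li : LinearIndependent F v := hMDS J hJc hJcard
  set π : (Fin n → F) →ₗ[F] ({i : Fin n // rb i = c} → F) :=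
    LinearMap.funLeft F F Subtype.val with hπ
  have hranV : Set.range v ⊆ ↑(stmt8_V (F := F) rb c) := by
    rintro _ ⟨j, rfl⟩ i hi
    exact hblock j.1 c (hJc j.1 j.2) i hi
  have hspanV : Submodule.span F (Set.range v) ≤ stmt8_V rb c :=
    Submodule.span_le.mpr hranV
  have hdisj : Disjoint (Submodule.span F (Set.range v)) (LinearMap.ker π) := by
    rw [Submodule.disjoint_def]
    intro x hx hker
    funext i
    by_cases hi : rb i = c
    · have : π x = 0 := LinearMap.mem_ker.mp hker
      have := congrFun this ⟨i, hi⟩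
      simpa [hπ] using this
    · exact hspanV hx i hi
  have li2 : LinearIndependent F (π ∘ v) := li.map hdisj
  have hcardeq : Fintype.card {j // j ∈ J} =
      Module.finrank F ({i : Fin n // rb i = c} → F) := by
    rw [Module.finrank_fintype_fun_eq_card, Fintype.card_coe, hJcard,
      Fintype.card_subtype, hrb]
  have hspan : Submodule.span F (Set.range (π ∘ v)) = ⊤ :=
    li2.span_eq_top_of_card_eq_finrank' hcardeq
  have hmemtop : π (fun i => A i q) ∈ Submodule.span F (Set.range (π ∘ v)) := by
    rw [hspan]; trivial
  rw [Set.range_comp, Submodule.span_image, Submodule.mem_map] at hmemtop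
  obtain ⟨x, hx, hπx⟩ := hmemtop
  have hAqV : (fun i => A i q) ∈ stmt8_V rb c := fun i hi => hblock q c hq i hi
  have hAq : (fun i => A i q) = x := by
    funext i
    by_cases hi : rb i = c
    · have := congrFun hπx ⟨i, hi⟩
      simpa [hπ] using this.symm
    · rw [hspanV hx i hi]
      exact hAqV i hi
  rw [hAq]
  refine Submodule.span_mono ?_ hx
  rintro _ ⟨j, rfl⟩
  exact ⟨j.1, (havail j.1 (hJsub j.2)).2, rfl⟩

/-- If fewer than `t` columns of segment `c` remain available, the column of `q` is not in
the span of the available columns. -/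
lemma stmt8_notmem {F : Type*} [Field F] {n k m t ℓ : ℕ}
    (A : Matrix (Fin n) (Fin m) F)
    (seg : Fin m → Option (Fin k)) (rb : Fin n → Fin k) (c : Fin k)
    (hsegc : (Finset.univ.filter fun j => seg j = some c).card = ℓ)
    (hzero : ∀ j, seg j = none → ∀ i, A i j = 0)
    (hblock : ∀ j c', seg j = some c' → ∀ i, rb i ≠ c' → A i j = 0)
    (hMDS : ∀ J : Finset (Fin m), (∀ j ∈ J, seg j = some c) → J.card = t →
      LinearIndependent F (fun j : {j // j ∈ J} => fun i => A i j.1))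
    (q : Fin m) (hq : seg q = some c) (S : Finset (Fin m)) (hqS : q ∉ S)
    (hcard : (Finset.univ.filter fun x => x ∉ S ∧ x ≠ q ∧ seg x = some c).card + 1 ≤ t)
    (htℓ : t ≤ ℓ) :
    (fun i => A i q) ∉
      Submodule.span F ((fun j i => A i j) '' {j : Fin m | j ∉ S ∧ j ≠ q}) := by
  intro hmem
  set avail : Finset (Fin m) :=
    Finset.univ.filter fun x => x ∉ S ∧ x ≠ q ∧ seg x = some c with havail
  have hsub : insert q avail ⊆ Finset.univ.filter fun j => seg j = some c := by
    intro x hx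
    rcases Finset.mem_insert.mp hx with rfl | hx
    · simp [hq]
    · simp only [havail, Finset.mem_filter] at hx ⊢
      exact ⟨hx.1, hx.2.2.2⟩
  have hqa : q ∉ avail := by simp [havail]
  have hins : (insert q avail).card = avail.card + 1 := Finset.card_insert_of_notMem hqa
  obtain ⟨J, hJsup, hJsub, hJcard⟩ :=
    Finset.exists_subsuperset_card_eq (n := t) hsub (by omega) (by rw [hsegc]; omega)
  have hJc : ∀ j ∈ J, seg j = some c := fun j hj => by
    have := hJsub hj; simpa using this
  set v : {j // j ∈ J} → (Fin n → F) := fun j => fun i => A i j.1 with hv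
  have li : LinearIndependent F v := hMDS J hJc hJcard
  have hqJ : q ∈ J := hJsup (Finset.mem_insert_self _ _)
  set i₀ : {j // j ∈ J} := ⟨q, hqJ⟩ with hi₀
  -- split the generating set
  have hsetsplit : {j : Fin m | j ∉ S ∧ j ≠ q} =
      (↑avail : Set (Fin m)) ∪ {j : Fin m | j ∉ S ∧ j ≠ q ∧ seg j ≠ some c} := by
    ext x
    simp only [Set.mem_union, Set.mem_setOf_eq, Finset.coe_filter, havail, Finset.mem_filter,
      Finset.mem_coe, Finset.mem_univ, true_and]
    by_cases hx : seg x = some c <;> tauto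
  set W := Submodule.span F ((fun j i => A i j) '' (↑avail : Set (Fin m))) with hW
  set U := Submodule.span F
    ((fun j i => A i j) '' {j : Fin m | j ∉ S ∧ j ≠ q ∧ seg j ≠ some c}) with hU
  have hmem2 : (fun i => A i q) ∈ W ⊔ U := by
    rw [hW, hU, ← Submodule.span_union, ← Set.image_union, ← hsetsplit]
    exact hmem
  have hWV : W ≤ stmt8_V rb c := by
    rw [hW, Submodule.span_le]
    rintro _ ⟨j, hj, rfl⟩ i hi
    have hjc : seg j = some c := by
      simp only [havail, Finset.coe_filter, Set.mem_setOf_eq] at hj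
      exact hj.2.2.2
    exact hblock j c hjc i hi
  have hUV' : U ≤ stmt8_V' rb c := by
    rw [hU, Submodule.span_le]
    rintro _ ⟨j, hj, rfl⟩ i hi
    rcases hcase : seg j with _ | c'
    · exact hzero j hcase i
    · exact hblock j c' hcase i (by rw [hi]; rintro rfl; exact hj.2.2 hcase)
  obtain ⟨w, hw, u, hu, hwu⟩ := Submodule.mem_sup.mp hmem2
  have hAqV : (fun i => A i q) ∈ stmt8_V rb c := fun i hi => hblock q c hq i hi
  have hu0 : u = 0 := by
    funext i
    by_cases hi : rb i = c
    · exact hUV' hu i hi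
    · have h1 : w i + u i = A i q := congrFun hwu i
      have h2 : w i = 0 := hWV hw i hi
      have h3 : A i q = 0 := hAqV i hi
      rw [h2, h3, zero_add] at h1
      simpa using h1
  have hAqW : (fun i => A i q) ∈ W := by
    rw [← hwu, hu0, add_zero]; exact hw
  have hWle : W ≤ Submodule.span F (v '' {x | x ≠ i₀}) := by
    rw [hW, Submodule.span_le]
    rintro _ ⟨j, hj, rfl⟩
    simp only [havail, Finset.coe_filter, Set.mem_setOf_eq, Finset.mem_univ, true_and] at hj
    have hjJ : j ∈ J := hJsup (Finset.mem_insert_of_mem (by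
      simp only [havail, Finset.mem_filter, Finset.mem_univ, true_and]; exact hj))
    refine Submodule.subset_span ⟨⟨j, hjJ⟩, ?_, rfl⟩
    simp only [Set.mem_setOf_eq, hi₀]
    intro h
    exact hj.2.1 (congrArg Subtype.val h)
  have hnot : v i₀ ∉ Submodule.span F (v '' {x | x ≠ i₀}) :=
    li.notMem_span_image (by simp)
  exact hnot (hWle hAqW)

/-- Fix a request `q` whose column in the block-MDS base matrix is nonzero, lying in a segment
of `ℓ` columns carrying an MDS block of rank `t = T/k`. Then `(q,S)` with `|S| = s`, `q ∉ S`
is decodable iff the number `j` of elements of `S` in `q`'s segment satisfies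
`ℓ - t ≤ j ≤ ℓ - 1`; consequently the number of such `S` equals
`∑_{j=ℓ-t}^{ℓ-1} C(ℓ-1,j) C(m-ℓ, s-j)`. -/
theorem stmt_8 {F : Type*} [Field F] {k t ℓ m : ℕ}
    (ht : 1 ≤ t) (htℓ : t ≤ ℓ) (hkl : k * ℓ ≤ m)
    (A : Matrix (Fin (k * t)) (Fin m) F)
    (seg : Fin m → Option (Fin k)) (rb : Fin (k * t) → Fin k)
    (hseg : ∀ c : Fin k, (Finset.univ.filter fun j => seg j = some c).card = ℓ)
    (hrb : ∀ c : Fin k, (Finset.univ.filter fun i => rb i = c).card = t)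
    (hzero : ∀ j, seg j = none → ∀ i, A i j = 0)
    (hblock : ∀ j c, seg j = some c → ∀ i, rb i ≠ c → A i j = 0)
    (hMDS : ∀ c : Fin k, ∀ J : Finset (Fin m), (∀ j ∈ J, seg j = some c) → J.card = t →
      LinearIndependent F (fun j : {j // j ∈ J} => fun i => A i j.1))
    (s : ℕ) (hs2 : s ≤ m - 1)
    (q : Fin m) (c : Fin k) (hq : seg q = some c) :
    (∀ S : Finset (Fin m), q ∉ S → S.card = s →
        ((fun i => A i q) ∉
            Submodule.span F ((fun j i => A i j) '' {j : Fin m | j ∉ S ∧ j ≠ q}) ↔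
          ℓ - t ≤ (S.filter fun j => seg j = some c).card ∧
            (S.filter fun j => seg j = some c).card ≤ ℓ - 1)) ∧
      (Finset.univ.filter fun S : Finset (Fin m) => q ∉ S ∧ S.card = s ∧
          (fun i => A i q) ∉
            Submodule.span F ((fun j i => A i j) '' {j : Fin m | j ∉ S ∧ j ≠ q})).card
        = ∑ j ∈ Finset.Icc (ℓ - t) (ℓ - 1),
            if j ≤ s then (ℓ - 1).choose j * (m - ℓ).choose (s - j) else 0 := by
  have hk : 0 < k := c.pos
  have hℓ1 : 1 ≤ ℓ := le_trans ht htℓ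
  set Pc : Finset (Fin m) := Finset.univ.filter fun j => seg j = some c with hPc
  have hqPc : q ∈ Pc := by simp [hPc, hq]
  have key : ∀ S : Finset (Fin m), q ∉ S →
      (Finset.univ.filter fun x => x ∉ S ∧ x ≠ q ∧ seg x = some c).card
        + (S.filter fun j => seg j = some c).card + 1 = ℓ := by
    intro S hqS
    set avail := Finset.univ.filter fun x => x ∉ S ∧ x ≠ q ∧ seg x = some c with ha
    have hsplit : Pc.erase q = avail ∪ S.filter fun j => seg j = some c := by
      ext x
      simp only [ha, hPc, Finset.mem_erase, Finset.mem_union, Finset.mem_filter,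
        Finset.mem_univ, true_and]
      constructor
      · rintro ⟨hxq, hxc⟩
        by_cases hxS : x ∈ S
        · exact Or.inr ⟨hxS, hxc⟩
        · exact Or.inl ⟨hxS, hxq, hxc⟩
      · rintro (⟨h1, h2, h3⟩ | ⟨h1, h2⟩)
        · exact ⟨h2, h3⟩
        · exact ⟨fun h => hqS (h ▸ h1), h2⟩
    have hdis : Disjoint avail (S.filter fun j => seg j = some c) := by
      rw [Finset.disjoint_left]
      intro x hx hx2
      simp only [ha, Finset.mem_filter, Finset.mem_univ, true_and] at hx
      exact hx.1 (Finset.mem_filter.mp hx2).1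
    have h1 : (Pc.erase q).card = ℓ - 1 := by
      rw [Finset.card_erase_of_mem hqPc, hPc, hseg c]
    rw [hsplit, Finset.card_union_of_disjoint hdis] at h1
    omega
  have main : ∀ S : Finset (Fin m), q ∉ S → S.card = s →
      ((fun i => A i q) ∉
          Submodule.span F ((fun j i => A i j) '' {j : Fin m | j ∉ S ∧ j ≠ q}) ↔
        ℓ - t ≤ (S.filter fun j => seg j = some c).card ∧
          (S.filter fun j => seg j = some c).card ≤ ℓ - 1) := by
    intro S hqS hScard
    have hkey := key S hqS
    constructor
    · intro hdec
      refine ⟨?_, by omega⟩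
      by_contra hcon
      push_neg at hcon
      exact hdec (stmt8_mem A seg rb c (hrb c) hblock (hMDS c) q hq _
        (Finset.univ.filter fun x => x ∉ S ∧ x ≠ q ∧ seg x = some c)
        (fun j hj => by
          simp only [Finset.mem_filter, Finset.mem_univ, true_and] at hj
          exact ⟨hj.2.2, hj.1, hj.2.1⟩)
        (by omega))
    · rintro ⟨h1, _⟩
      exact stmt8_notmem A seg rb c (hseg c) hzero hblock (hMDS c) q hq S hqS (by omega) htℓ
  refine ⟨main, ?_⟩
  set P : Finset (Fin m) := Pc.erase q with hP
  set Q : Finset (Fin m) := Finset.univ.filter fun x => ¬ seg x = some c with hQ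
  have hPcard : P.card = ℓ - 1 := by
    rw [hP, Finset.card_erase_of_mem hqPc, hPc, hseg c]
  have hQcard : Q.card = m - ℓ := by
    have hQeq : Q = Finset.univ \ Pc := by
      ext x
      simp [hQ, hPc]
    rw [hQeq, Finset.card_sdiff_of_subset (Finset.subset_univ Pc), Finset.card_univ,
      Fintype.card_fin, hPc, hseg c]
  have hdisjPQ : Disjoint P Q := by
    rw [Finset.disjoint_left]
    intro x hxP hxQ
    simp only [hP, hPc, Finset.mem_erase, Finset.mem_filter, Finset.mem_univ, true_and] at hxP
    simp only [hQ, Finset.mem_filter, Finset.mem_univ, true_and] at hxQ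
    exact hxQ hxP.2
  have hcoverPQ : ∀ x : Fin m, x ≠ q → x ∈ P ∨ x ∈ Q := by
    intro x hx
    by_cases h : seg x = some c
    · exact Or.inl (by simp [hP, hPc, hx, h])
    · exact Or.inr (by simp [hQ, h])
  have hPq : q ∉ P := Finset.notMem_erase q Pc
  have hQq : q ∉ Q := by simp [hQ, hq]
  have hSP : ∀ S : Finset (Fin m), q ∉ S →
      (S ∩ P).card = (S.filter fun j => seg j = some c).card := by
    intro S hqS
    congr 1
    ext x
    simp only [Finset.mem_inter, hP, hPc, Finset.mem_erase, Finset.mem_filter,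
      Finset.mem_univ, true_and]
    constructor
    · rintro ⟨h1, _, h3⟩
      exact ⟨h1, h3⟩
    · rintro ⟨h1, h2⟩
      exact ⟨h1, fun h => hqS (h ▸ h1), h2⟩
  have hfilter : (Finset.univ.filter fun S : Finset (Fin m) => q ∉ S ∧ S.card = s ∧
      (fun i => A i q) ∉
        Submodule.span F ((fun j i => A i j) '' {j : Fin m | j ∉ S ∧ j ≠ q}))
      = Finset.univ.filter fun S : Finset (Fin m) => q ∉ S ∧ S.card = s ∧
        ℓ - t ≤ (S.filter fun j => seg j = some c).card ∧
        (S.filter fun j => seg j = some c).card ≤ ℓ - 1 := by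
    apply Finset.filter_congr
    intro S _
    constructor
    · rintro ⟨h1, h2, h3⟩
      exact ⟨h1, h2, (main S h1 h2).mp h3⟩
    · rintro ⟨h1, h2, h3⟩
      exact ⟨h1, h2, (main S h1 h2).mpr h3⟩
  rw [hfilter]
  rw [Finset.card_eq_sum_card_fiberwise
    (f := fun S : Finset (Fin m) => (S.filter fun j => seg j = some c).card)
    (t := Finset.Icc (ℓ - t) (ℓ - 1)) (fun S hS => by
      simp only [Finset.mem_coe, Finset.mem_filter] at hS
      exact Finset.mem_Icc.mpr ⟨hS.2.2.2.1, hS.2.2.2.2⟩)]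
  apply Finset.sum_congr rfl
  intro j hj
  rw [Finset.mem_Icc] at hj
  rw [Finset.filter_filter]
  have hcount := stmt8_count q P Q hPq hQq hdisjPQ hcoverPQ s j
  rw [hPcard, hQcard] at hcount
  rw [← hcount]
  refine congrArg Finset.card (Finset.filter_congr ?_)
  intro S _
  constructor
  · rintro ⟨⟨h1, h2, _, _⟩, h5⟩
    refine ⟨h1, h2, ?_⟩
    rw [hSP S h1]
    exact h5
  · rintro ⟨h1, h2, h3⟩
    have h4 := hSP S h1
    exact ⟨⟨h1, h2, by omega, by omega⟩, by omega⟩
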